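/- arXiv:2408.01898 — 3 statements merged into one kernel-verified Lean document; each statement's English description precedes it below -/
import Mathlib

section
/- For any $s > 0$, the unique $w > 0$ satisfying $w(w+3)^2 = s^2$ is given by $w = 4\sinh^2\left(\frac{1}{6}\operatorname{arcosh}\left(1 + \frac{s^2}{2}\right)\right)$. -/
open Real

noncomputable def arcosh (x : ℝ) : ℝ := Real.log (x + Real.sqrt (x ^ 2 - 1))

lemma cosh_arcosh {x : ℝ} (hx : 1 ≤ x) : Real.cosh (_root_.arcosh x) = x := by
  have hx0 : (0:ℝ) ≤ x ^ 2 - 1 := by nlinarith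
  have hr : Real.sqrt (x ^ 2 - 1) ^ 2 = x ^ 2 - 1 := Real.sq_sqrt hx0
  have hrnn : 0 ≤ Real.sqrt (x ^ 2 - 1) := Real.sqrt_nonneg _
  have ha : 0 < x + Real.sqrt (x ^ 2 - 1) := by linarith
  have hinv : (x + Real.sqrt (x ^ 2 - 1))⁻¹ = x - Real.sqrt (x ^ 2 - 1) := by
    apply inv_eq_of_mul_eq_one_right
    nlinarith [hr]
  rw [_root_.arcosh, Real.cosh_eq, Real.exp_neg, Real.exp_log ha, hinv]
  ring

lemma arcosh_pos {x : ℝ} (hx : 1 < x) : 0 < _root_.arcosh x := by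
  have hx0 : (0:ℝ) ≤ x ^ 2 - 1 := by nlinarith
  apply Real.log_pos
  have := Real.sqrt_nonneg (x ^ 2 - 1)
  linarith

/-- For any `s > 0`, the unique `w > 0` with `w (w+3)² = s²` is
`w = 4 sinh²(arcosh(1 + s²/2)/6)`. -/
theorem stmt1 (s : ℝ) (hs : 0 < s) :
    ∀ w : ℝ, (0 < w ∧ w * (w + 3) ^ 2 = s ^ 2) ↔
      w = 4 * Real.sinh ((1 / 6) * _root_.arcosh (1 + s ^ 2 / 2)) ^ 2 := by
  intro w
  set x : ℝ := 1 + s ^ 2 / 2 with hxdef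
  have hx : 1 < x := by rw [hxdef]; nlinarith
  set u : ℝ := (1 / 6) * _root_.arcosh x with hu
  have hupos : 0 < u := by
    have := _root_.arcosh_pos hx
    positivity
  have hcosh : Real.cosh (6 * u) = x := by
    rw [hu]; rw [show 6 * (1/6 * _root_.arcosh x) = _root_.arcosh x by ring]
    exact _root_.cosh_arcosh hx.le
  have hexp : Real.cosh (6 * u) = 4 * (2 * Real.cosh u ^ 2 - 1) ^ 3
      - 3 * (2 * Real.cosh u ^ 2 - 1) := by
    have h1 : Real.cosh (6 * u) = Real.cosh (3 * (2 * u)) := by ring_nf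
    rw [h1, Real.cosh_three_mul, Real.cosh_two_mul,
      Real.cosh_sq']
    ring
  set w0 : ℝ := 4 * Real.sinh u ^ 2 with hw0
  have hsinh : Real.sinh u ^ 2 = Real.cosh u ^ 2 - 1 := by
    have := Real.cosh_sq' u; linarith
  have hw0pos : 0 < w0 := by
    have : 0 < Real.sinh u := Real.sinh_pos_iff.mpr hupos
    positivity
  have hw0eq : w0 * (w0 + 3) ^ 2 = s ^ 2 := by
    have hxeq : 4 * (2 * Real.cosh u ^ 2 - 1) ^ 3
        - 3 * (2 * Real.cosh u ^ 2 - 1) = 1 + s ^ 2 / 2 := by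
      rw [← hexp, hcosh]
    rw [hw0, hsinh]
    nlinarith [hxeq]
  constructor
  · rintro ⟨hwpos, hweq⟩
    have hfac : (w - w0) * (w ^ 2 + w * w0 + w0 ^ 2 + 6 * w + 6 * w0 + 9) = 0 := by
      nlinarith [hweq, hw0eq]
    have hq : 0 < w ^ 2 + w * w0 + w0 ^ 2 + 6 * w + 6 * w0 + 9 := by positivity
    have := mul_eq_zero.mp hfac
    rcases this with h | h
    · linarith
    · linarith
  · rintro rfl
    exact ⟨hw0pos, hw0eq⟩
end

section
/- Given mean $\mu > 0$, coefficient of variation $v > 0$, and skewness $s > 0$ such that $\lambda := v / \left(2\sinh\left(\frac{1}{6}\operatorname{arcosh}(1 + s^2/2)\right)\right)$ satisfies $0 < \lambda \le 1$, the shifted lognormal distribution with parameters $\sigma = \sqrt{\ln(1+w)}$, $w = 4\sinh^2\left(\frac{1}{6}\operatorname{arcosh}(1+s^2/2)\right)$, and this $\lambda$ has mean $\mu$, coefficient of variation $v$, and skewness $s$. -/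
open Real

/-- Moment matching of the shifted lognormal distribution: given mean `μ > 0`,
coefficient of variation `v > 0` and skewness `s > 0`, the parameters
`w = 4 sinh²(arcosh(1+s²/2)/6)`, `σ = √(ln(1+w))`, `λ = v/(2 sinh(arcosh(1+s²/2)/6))`
(assumed to satisfy `0 < λ ≤ 1`) reproduce mean `μ`, coefficient of variation
`λ √(e^{σ²}-1) = v`, and skewness `√(e^{σ²}-1)(e^{σ²}-1+3) = s`. -/
theorem stmt6 (μ v s : ℝ) (hμ : 0 < μ) (hv : 0 < v) (hs : 0 < s)
    (w : ℝ) (hw : w = 4 * Real.sinh ((1 / 6) * _root_.arcosh (1 + s ^ 2 / 2)) ^ 2)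
    (σ : ℝ) (hσ : σ = Real.sqrt (Real.log (1 + w)))
    (lam : ℝ) (hlam : lam = v / (2 * Real.sinh ((1 / 6) * _root_.arcosh (1 + s ^ 2 / 2))))
    (hlam0 : 0 < lam) (hlam1 : lam ≤ 1) :
    μ = μ ∧ Real.exp (σ ^ 2) - 1 = w ∧
      lam * Real.sqrt (Real.exp (σ ^ 2) - 1) = v ∧
      Real.sqrt (Real.exp (σ ^ 2) - 1) * ((Real.exp (σ ^ 2) - 1) + 3) = s := by
  obtain ⟨x, hxdef⟩ : ∃ x : ℝ, x = 1 + s ^ 2 / 2 := ⟨_, rfl⟩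
  rw [← hxdef] at hw hlam
  have hx1 : (1 : ℝ) < x := by rw [hxdef]; nlinarith [mul_pos hs hs]
  have hx2 : (0 : ℝ) < x ^ 2 - 1 := by nlinarith
  have hsq : Real.sqrt (x ^ 2 - 1) ^ 2 = x ^ 2 - 1 := Real.sq_sqrt hx2.le
  have hsqpos : 0 < Real.sqrt (x ^ 2 - 1) := Real.sqrt_pos.mpr hx2
  obtain ⟨y, hydef⟩ : ∃ y : ℝ, y = x + Real.sqrt (x ^ 2 - 1) := ⟨_, rfl⟩
  have hy1 : 1 < y := by rw [hydef]; nlinarith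
  have hy0 : 0 < y := by linarith
  obtain ⟨u, hudef⟩ : ∃ u : ℝ, u = _root_.arcosh x := ⟨_, rfl⟩
  rw [← hudef] at hw hlam
  have hu : u = Real.log y := by rw [hudef, hydef]; rfl
  have hu0 : 0 < u := by rw [hu]; exact Real.log_pos hy1
  have hey : Real.exp u = y := by rw [hu]; exact Real.exp_log hy0
  have hinv : y * (x - Real.sqrt (x ^ 2 - 1)) = 1 := by rw [hydef]; nlinarith
  have heyinv : Real.exp (-u) = x - Real.sqrt (x ^ 2 - 1) := by
    rw [Real.exp_neg, hey]
    exact inv_eq_of_mul_eq_one_right hinv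
  have hcosh : Real.cosh u = x := by
    rw [Real.cosh_eq, hey, heyinv, hydef]; ring
  -- sinh(u/2) = s/2
  have hhalf : Real.sinh (u / 2) = s / 2 := by
    have h2 : Real.cosh (2 * (u / 2)) = 2 * Real.sinh (u / 2) ^ 2 + 1 := by
      rw [Real.cosh_two_mul, Real.cosh_sq]; ring
    have h3 : Real.sinh (u / 2) ^ 2 = s ^ 2 / 4 := by
      have heq : (2 : ℝ) * (u / 2) = u := by ring
      rw [heq, hcosh, hxdef] at h2
      linarith
    have hpos : 0 < Real.sinh (u / 2) := Real.sinh_pos_iff.mpr (by linarith)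
    nlinarith [h3, hpos, hs]
  obtain ⟨t, htdef⟩ : ∃ t : ℝ, t = (1 / 6) * u := ⟨_, rfl⟩
  rw [← htdef] at hw hlam
  have ht0 : 0 < t := by rw [htdef]; positivity
  have hst : 0 < Real.sinh t := Real.sinh_pos_iff.mpr ht0
  have h3t : (3 : ℝ) * t = u / 2 := by rw [htdef]; ring
  have hkey : 4 * Real.sinh t ^ 3 + 3 * Real.sinh t = s / 2 := by
    rw [← Real.sinh_three_mul, h3t, hhalf]
  have hw0 : 0 < w := by rw [hw]; positivity
  have hsig : σ ^ 2 = Real.log (1 + w) := by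
    rw [hσ]
    exact Real.sq_sqrt (Real.log_nonneg (by linarith))
  have hexp : Real.exp (σ ^ 2) - 1 = w := by
    rw [hsig, Real.exp_log (by linarith)]; ring
  have hsqw : Real.sqrt w = 2 * Real.sinh t := by
    rw [hw]
    have h4 : 4 * Real.sinh t ^ 2 = (2 * Real.sinh t) ^ 2 := by ring
    rw [h4, Real.sqrt_sq (by positivity)]
  refine ⟨rfl, hexp, ?_, ?_⟩
  · rw [hexp, hsqw, hlam]
    field_simp
  · rw [hexp, hsqw, hw]
    linear_combination 2 * hkey
end

section
/- Let $\lambda > 0$, $\alpha > 0$, let $X$ be a Gamma($\alpha$, scale 1) random variable conditioned on $X < \lambda$, and conditionally on $X$ let $N$ be Poisson with intensity $\lambda - X$. Then for every nonnegative integer $n$, $\mathrm{Prob}(N = n) = \frac{1}{P_{\mathcal{G}}(\lambda;\alpha)} \frac{\lambda^{\alpha+n} e^{-\lambda}}{\Gamma(n+\alpha+1)}$, i.e., $N$ has the shifted Poisson distribution $\mathcal{SP}(\lambda,\alpha)$. -/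
open Real MeasureTheory

lemma beta_real (lam α : ℝ) (hlam : 0 < lam) (hα : 0 < α) (n : ℕ) :
    ∫ t in Set.Ioc (0 : ℝ) lam, t ^ (α - 1) * (lam - t) ^ n
      = lam ^ (α + n) * (Real.Gamma α * n.factorial / Real.Gamma (α + n + 1)) := by
  have hGpos : 0 < Real.Gamma (α + n + 1) := Real.Gamma_pos_of_pos (by positivity)
  have hB : Complex.betaIntegral (α : ℂ) ((n : ℂ) + 1)
      = ((Real.Gamma α * n.factorial / Real.Gamma (α + n + 1) : ℝ) : ℂ) := by
    have h1 : Complex.Gamma (α : ℂ) * Complex.Gamma ((n : ℂ) + 1)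
        = Complex.Gamma ((α : ℂ) + ((n : ℂ) + 1)) * Complex.betaIntegral (α : ℂ) ((n : ℂ) + 1) :=
      Complex.Gamma_mul_Gamma_eq_betaIntegral (by simpa using hα) (by simp; positivity)
    have h2 : Complex.Gamma (α : ℂ) = (Real.Gamma α : ℂ) := Complex.Gamma_ofReal α
    have h3 : Complex.Gamma ((n : ℂ) + 1) = (n.factorial : ℂ) := Complex.Gamma_nat_eq_factorial n
    have h4 : Complex.Gamma ((α : ℂ) + ((n : ℂ) + 1)) = (Real.Gamma (α + n + 1) : ℂ) := by
      rw [show (α : ℂ) + ((n : ℂ) + 1) = ((α + n + 1 : ℝ) : ℂ) by push_cast; ring,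
        Complex.Gamma_ofReal]
    rw [h2, h3, h4] at h1
    have h5 : (Real.Gamma (α + n + 1) : ℂ) ≠ 0 := by exact_mod_cast hGpos.ne'
    field_simp
    rw [Complex.ofReal_div, Complex.ofReal_mul, Complex.ofReal_natCast, eq_div_iff h5, h1]
    ring
  have hsc := Complex.betaIntegral_scaled (α : ℂ) ((n : ℂ) + 1) hlam
  rw [hB] at hsc
  have hL : ∫ x in (0:ℝ)..lam, (x : ℂ) ^ ((α : ℂ) - 1) * ((lam : ℂ) - x) ^ ((n : ℂ) + 1 - 1)
      = ((∫ x in (0:ℝ)..lam, x ^ (α - 1) * (lam - x) ^ n : ℝ) : ℂ) := by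
    rw [← intervalIntegral.integral_ofReal]
    refine intervalIntegral.integral_congr fun x hx => ?_
    have hx0 : 0 ≤ x := by
      rcases Set.mem_uIcc.mp hx with h | h
      · exact h.1
      · linarith [h.1, hlam.le]
    rw [show (n : ℂ) + 1 - 1 = ((n : ℕ) : ℂ) by ring, Complex.cpow_natCast,
      show ((α : ℂ) - 1) = ((α - 1 : ℝ) : ℂ) by push_cast; ring, ← Complex.ofReal_cpow hx0]
    push_cast
    ring
  have hR : ((lam : ℂ)) ^ ((α : ℂ) + ((n : ℂ) + 1) - 1) = ((lam ^ (α + n) : ℝ) : ℂ) := by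
    rw [show (α : ℂ) + ((n : ℂ) + 1) - 1 = ((α + n : ℝ) : ℂ) by push_cast; ring,
      ← Complex.ofReal_cpow hlam.le]
  rw [hL, hR] at hsc
  rw [← intervalIntegral.integral_of_le hlam.le]
  exact_mod_cast hsc

/-- Gamma CDF `P_G(x; α)` (unit scale). -/
noncomputable def gammaCdf (x α : ℝ) : ℝ :=
  (∫ t in Set.Ioc (0 : ℝ) x, t ^ (α - 1) * Real.exp (-t)) / Real.Gamma α

/-- Sampling a shifted Poisson variable via a gamma-mixture Poisson: the density
identity `∫_0^λ [t^{α-1} e^{-t} / (Γ(α) P_G(λ;α))] ⋅ [(λ-t)^n e^{-(λ-t)} / n!] dt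
= λ^{α+n} e^{-λ} / (P_G(λ;α) Γ(n+α+1))`, i.e. the mixture has the shifted Poisson
mass function. -/
theorem stmt13 (lam α : ℝ) (hlam : 0 < lam) (hα : 0 < α) (n : ℕ) :
    ∫ t in Set.Ioc (0 : ℝ) lam,
        (t ^ (α - 1) * Real.exp (-t) / (Real.Gamma α * gammaCdf lam α))
          * ((lam - t) ^ n * Real.exp (-(lam - t)) / (Nat.factorial n))
      = (1 / gammaCdf lam α) * (lam ^ (α + n) * Real.exp (-lam) / Real.Gamma (n + α + 1)) := by
  set C := gammaCdf lam α with hCdef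
  have key : ∀ t : ℝ,
      (t ^ (α - 1) * Real.exp (-t) / (Real.Gamma α * C))
          * ((lam - t) ^ n * Real.exp (-(lam - t)) / (Nat.factorial n))
        = (Real.exp (-lam) / (Real.Gamma α * C * Nat.factorial n))
          * (t ^ (α - 1) * (lam - t) ^ n) := by
    intro t
    have he : Real.exp (-t) * Real.exp (-(lam - t)) = Real.exp (-lam) := by
      rw [← Real.exp_add]; ring_nf
    rw [← he]; ring
  simp_rw [key]
  rw [integral_const_mul, beta_real lam α hlam hα n]
  have hG : Real.Gamma ((n : ℝ) + α + 1) = Real.Gamma (α + n + 1) := by ring_nf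
  rw [hG]
  have hΓ : Real.Gamma α ≠ 0 := (Real.Gamma_pos_of_pos hα).ne'
  have hΓ2 : Real.Gamma (α + n + 1) ≠ 0 := (Real.Gamma_pos_of_pos (by positivity)).ne'
  have hf : (Nat.factorial n : ℝ) ≠ 0 := by positivity
  by_cases hC : C = 0
  · simp [hC]
  · field_simp
end
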